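/- Let V be a finite-dimensional real inner product space with basis Δ = {α₁,…,αₙ} satisfying ⟨αᵢ, αⱼ⟩ ≤ 0 for all i ≠ j, and let {β₁,…,βₙ} be the dual basis (i.e. ⟨βᵢ, αⱼ⟩ = δᵢⱼ). Then each βᵢ lies in the nonnegative cone spanned by Δ: writing βᵢ = Σⱼ eⱼᵢ αⱼ, one has eⱼᵢ ≥ 0 for all i, j. -/

import Mathlib

open RealInnerProductSpace

/-- Langlands' geometric lemma: if a basis `α₁,…,αₙ` of a finite-dimensional real inner
product space has pairwise nonpositive inner products, then each vector `βᵢ` of the dual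
basis (characterized by `⟪βᵢ, αⱼ⟫ = δᵢⱼ`) is a nonnegative linear combination of the `αⱼ`;
i.e. the coefficients `eⱼᵢ` in `βᵢ = Σⱼ eⱼᵢ αⱼ` are all nonnegative. -/
theorem langlands_dual_basis_nonneg_coeffs
    {V : Type*} [NormedAddCommGroup V] [InnerProductSpace ℝ V] [FiniteDimensional ℝ V]
    {n : ℕ} (b : Module.Basis (Fin n) ℝ V)
    (hneg : ∀ i j, i ≠ j → ⟪b i, b j⟫ ≤ 0)
    (β : Fin n → V)
    (hdual : ∀ i j, ⟪β i, b j⟫ = if i = j then (1 : ℝ) else 0) :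
    ∀ i j, 0 ≤ b.repr (β i) j := by
  intro i
  set e : Fin n → ℝ := fun j => b.repr (β i) j with he
  set f : Fin n → ℝ := fun j => max (-(e j)) 0 with hfdef
  set g : Fin n → ℝ := fun j => max (e j) 0 with hgdef
  have hf0 : ∀ j, 0 ≤ f j := fun j => le_max_right _ _
  have hg0 : ∀ j, 0 ≤ g j := fun j => le_max_right _ _
  have heq : ∀ j, e j = g j - f j := by
    intro j
    simp only [hfdef, hgdef]
    exact (max_zero_sub_max_neg_zero_eq_self (e j)).symm
  set w : V := ∑ j, f j • b j with hw
  set v : V := ∑ j, g j • b j with hv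
  have hβ : β i = v - w := by
    conv_lhs => rw [← b.sum_repr (β i)]
    rw [hv, hw, ← Finset.sum_sub_distrib]
    refine Finset.sum_congr rfl fun j _ => ?_
    rw [← sub_smul, ← heq j]
  have hvw : ⟪v, w⟫ ≤ 0 := by
    rw [hv, hw, sum_inner]
    apply Finset.sum_nonpos
    intro j _
    rw [inner_sum]
    apply Finset.sum_nonpos
    intro k _
    rw [real_inner_smul_left, real_inner_smul_right]
    rcases eq_or_ne j k with rfl | hjk
    · have : g j * f j = 0 := by
        rcases le_total (e j) 0 with h | h
        · have : g j = 0 := by simp [hgdef, h]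
          simp [this]
        · have : f j = 0 := by simp [hfdef, h]
          simp [this]
      rw [← mul_assoc, this, zero_mul]
    · have := hneg j k hjk
      have h1 : 0 ≤ g j * f k := mul_nonneg (hg0 j) (hf0 k)
      nlinarith
  have hβw : ⟪β i, w⟫ = f i := by
    rw [hw, inner_sum]
    rw [Finset.sum_eq_single i]
    · rw [real_inner_smul_right, hdual, if_pos rfl, mul_one]
    · intro k _ hk
      rw [real_inner_smul_right, hdual, if_neg (Ne.symm hk), mul_zero]
    · intro h; exact absurd (Finset.mem_univ i) h
  have hwn : ⟪w, w⟫ ≤ 0 := by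
    have : w = v - β i := by rw [hβ]; abel
    calc ⟪w, w⟫ = ⟪v, w⟫ - ⟪β i, w⟫ := by nth_rewrite 1 [this]; rw [inner_sub_left]
    _ ≤ 0 - f i := by
        apply sub_le_sub hvw
        rw [hβw]
    _ ≤ 0 := by simpa using hf0 i
  have hw0 : w = 0 := by
    have := real_inner_self_nonneg (x := w)
    have h0 : ⟪w, w⟫ = 0 := le_antisymm hwn this
    exact inner_self_eq_zero.mp h0
  have hfz : ∀ j, f j = 0 := by
    intro j
    have : b.repr w = Finsupp.equivFunOnFinite.symm f := by
      rw [hw]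
      ext k
      rw [map_sum]
      simp [Finsupp.single_apply, Finset.sum_ite_eq']
    rw [hw0, map_zero] at this
    have := congrArg (fun φ => φ j) this.symm
    simpa using this
  intro j
  have := hfz j
  simp only [hfdef, max_eq_right_iff] at this
  have : -(e j) ≤ 0 := by
    by_contra h
    push_neg at h
    have : f j = -(e j) := max_eq_left h.le
    rw [hfz j] at this
    linarith
  linarith [neg_nonpos.mp this]
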